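/- Remark 5.6 (relation between the FA-1f interface energies). Fix ρ∈(0,1). Let Σ₁ = lim_{L→∞} lim_{L'→∞} Σ_{L,L'} be the interface energy defined with the Dirichlet form of the FA-1f model with two empty boundaries, and let Σ₂ = lim_{L→∞} Σ_L be the interface energy defined with the Dirichlet form of the FA-1f model with one empty (right) boundary. Then Σ₁ = 2Σ₂. -/

import Mathlib

open Finset Filter

open scoped Classical

/-- A configuration on the box `{1,…,N}` (0-indexed by `Fin N`). -/
abbrev Config (N : ℕ) := Fin N → Bool

/-- Occupation variable `η_i ∈ {0,1}` as a real number. -/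
noncomputable def occ {N : ℕ} (η : Config N) (i : Fin N) : ℝ := if η i then 1 else 0

/-- Bernoulli(ρ) product weight of a configuration. -/
noncomputable def bern (ρ : ℝ) {N : ℕ} (η : Config N) : ℝ :=
  ∏ i, (if η i then ρ else 1 - ρ)

/-- Expectation under the Bernoulli(ρ) product measure `ν`. -/
noncomputable def expect (ρ : ℝ) {N : ℕ} (f : Config N → ℝ) : ℝ :=
  ∑ η : Config N, bern ρ η * f η

/-- The configuration `η^i`, obtained by flipping `η` at site `i`. -/
def flipAt {N : ℕ} (η : Config N) (i : Fin N) : Config N :=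
  Function.update η i (!η i)

/-- Occupation at the 1-indexed position `k ∈ {0,…,N+1}`, with boundary value
`bl` at `k = 0` and `br` at `k = N+1` (and beyond). -/
noncomputable def occAt {N : ℕ} (η : Config N) (bl br : ℝ) (k : ℕ) : ℝ :=
  if hk : k = 0 then bl
  else if h : k ≤ N then (if η ⟨k - 1, by omega⟩ then 1 else 0) else br

/-- The three kinetically constrained models considered: East (empty right boundary),
FA-1f with two empty boundaries, FA-1f with one empty (right) boundary. -/
inductive KCM | east | fa2 | fa1

/-- The kinetic constraint `r_i(η)` of each model, at the (0-indexed) site `i`. -/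
noncomputable def constr (m : KCM) {N : ℕ} (η : Config N) (i : Fin N) : ℝ :=
  match m with
  | KCM.east => 1 - occAt η 0 0 (i.1 + 2)
  | KCM.fa2  => 1 - occAt η 0 0 i.1 * occAt η 0 0 (i.1 + 2)
  | KCM.fa1  => 1 - occAt η 1 0 i.1 * occAt η 1 0 (i.1 + 2)

/-- The jump rate `c_i(η) = r_i(η)·[η_i(1−ρ)+(1−η_i)ρ]`. -/
noncomputable def crate (m : KCM) (ρ : ℝ) {N : ℕ} (η : Config N) (i : Fin N) : ℝ :=
  constr m η i * (if η i then 1 - ρ else ρ)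

/-- The escape rate `𝓗(η) = Σ_i c_i(η)`. -/
noncomputable def escRate (m : KCM) (ρ : ℝ) {N : ℕ} (η : Config N) : ℝ :=
  ∑ i, crate m ρ η i

/-- The Dirichlet form `𝒟_N(g) = Σ_i ν(c_i(η)(g(η^i)−g(η))²)`. -/
noncomputable def dirichlet (m : KCM) (ρ : ℝ) {N : ℕ} (g : Config N → ℝ) : ℝ :=
  ∑ i, expect ρ (fun η => crate m ρ η i * (g (flipAt η i) - g η) ^ 2)

/-- The rescaled cumulant generating function `φ^{(N)}(λ)`, via the
Donsker–Varadhan variational (principal eigenvalue) formula. -/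
noncomputable def phi (m : KCM) (ρ : ℝ) (N : ℕ) (lam : ℝ) : ℝ :=
  sSup { x | ∃ f : Config N → ℝ, (∀ η, 0 ≤ f η) ∧ expect ρ f = 1 ∧
    x = (Real.exp lam - 1) * expect ρ (fun η => f η * escRate m ρ η)
        - Real.exp lam * dirichlet m ρ (fun η => Real.sqrt (f η)) }

/-- The mean instantaneous activity `𝔸 = ν(c_j)` at an interior site `j`:
`2ρ(1−ρ)²` for East and `2ρ(1−ρ)(1−ρ²)` for FA-1f. -/
noncomputable def meanAct (m : KCM) (ρ : ℝ) : ℝ :=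
  match m with
  | KCM.east => 2 * ρ * (1 - ρ) ^ 2
  | _ => 2 * ρ * (1 - ρ) * (1 - ρ ^ 2)

/-- The two-boundary interface energy `Σ_{L,L'}` for FA-1f with two empty
boundaries: the infimum of `𝒟_{L+L'+2}(√f)` over probability densities `f`
with `ν(f·η_{L+1}η_{L+2}) = 1`. -/
noncomputable def SigmaTwo (ρ : ℝ) (L L' : ℕ) : ℝ :=
  sInf { x | ∃ f : Config (L + L' + 2) → ℝ, (∀ η, 0 ≤ f η) ∧ expect ρ f = 1 ∧
    expect ρ (fun η => f η * occ η ⟨L, by omega⟩ * occ η ⟨L + 1, by omega⟩) = 1 ∧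
    x = dirichlet KCM.fa2 ρ (fun η => Real.sqrt (f η)) }

/-- The one-boundary interface energy `Σ_L`: the infimum of `𝒟_L(√f)`
over probability densities `f` with `ν(f·η_1) = 1`, for the model `m`. -/
noncomputable def SigmaOne (m : KCM) (ρ : ℝ) (L : ℕ) : ℝ :=
  sInf { x | ∃ f : Config L → ℝ, (∀ η, 0 ≤ f η) ∧ expect ρ f = 1 ∧
    expect ρ (fun η => f η * occAt η 0 0 1) = 1 ∧
    x = dirichlet m ρ (fun η => Real.sqrt (f η)) }


section Basic
variable {ρ : ℝ} {N : ℕ}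

lemma bern_pos (h0 : 0 < ρ) (h1 : ρ < 1) (η : Config N) : 0 < bern ρ η :=
  Finset.prod_pos fun i _ => by split <;> linarith

lemma bern_nonneg (h0 : 0 < ρ) (h1 : ρ < 1) (η : Config N) : 0 ≤ bern ρ η :=
  (bern_pos h0 h1 η).le

lemma occAt_mem (η : Config N) {bl br : ℝ} (hbl : bl = 0 ∨ bl = 1)
    (hbr : br = 0 ∨ br = 1) (k : ℕ) : occAt η bl br k = 0 ∨ occAt η bl br k = 1 := by
  unfold occAt; split_ifs with h1 h2 h3 <;>
    first | exact hbl | exact hbr | simp | simp [h3] | (rename_i h; simp [h])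

lemma constr_nonneg (m : KCM) (η : Config N) (i : Fin N) : 0 ≤ constr m η i := by
  cases m <;> unfold constr
  · rcases occAt_mem η (Or.inl rfl) (Or.inl rfl) (i.1 + 2) with h | h <;> rw [h] <;> norm_num
  · rcases occAt_mem η (Or.inl rfl) (Or.inl rfl) i.1 with h | h <;>
      rcases occAt_mem η (Or.inl rfl) (Or.inl rfl) (i.1 + 2) with h' | h' <;>
      rw [h, h'] <;> norm_num
  · rcases occAt_mem η (Or.inr rfl) (Or.inl rfl) i.1 with h | h <;>
      rcases occAt_mem η (Or.inr rfl) (Or.inl rfl) (i.1 + 2) with h' | h' <;>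
      rw [h, h'] <;> norm_num

lemma crate_nonneg (m : KCM) (h0 : 0 < ρ) (h1 : ρ < 1) (η : Config N) (i : Fin N) :
    0 ≤ crate m ρ η i :=
  mul_nonneg (constr_nonneg m η i) (by split <;> linarith)

lemma expect_nonneg (h0 : 0 < ρ) (h1 : ρ < 1) {f : Config N → ℝ} (hf : ∀ η, 0 ≤ f η) :
    0 ≤ expect ρ f :=
  Finset.sum_nonneg fun η _ => mul_nonneg (bern_nonneg h0 h1 η) (hf η)

lemma dirichlet_nonneg (m : KCM) (h0 : 0 < ρ) (h1 : ρ < 1) (g : Config N → ℝ) :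
    0 ≤ dirichlet m ρ g :=
  Finset.sum_nonneg fun i _ => expect_nonneg h0 h1 fun η =>
    mul_nonneg (crate_nonneg m h0 h1 η i) (sq_nonneg _)

/-- Key convexity inequality. -/
lemma sqrt_sum_sub_sqrt_sum_sq_le {ι : Type*} [Fintype ι] (p x y : ι → ℝ)
    (hp : ∀ i, 0 ≤ p i) (hx : ∀ i, 0 ≤ x i) (hy : ∀ i, 0 ≤ y i) :
    (Real.sqrt (∑ i, p i * x i) - Real.sqrt (∑ i, p i * y i)) ^ 2
      ≤ ∑ i, p i * (Real.sqrt (x i) - Real.sqrt (y i)) ^ 2 := by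
  have hX : 0 ≤ ∑ i, p i * x i := Finset.sum_nonneg fun i _ => mul_nonneg (hp i) (hx i)
  have hY : 0 ≤ ∑ i, p i * y i := Finset.sum_nonneg fun i _ => mul_nonneg (hp i) (hy i)
  have hcs : ∑ i, p i * (Real.sqrt (x i) * Real.sqrt (y i))
      ≤ Real.sqrt (∑ i, p i * x i) * Real.sqrt (∑ i, p i * y i) := by
    have h2 : (∑ i : ι, p i * (Real.sqrt (x i) * Real.sqrt (y i))) ^ 2
        ≤ (∑ i, p i * x i) * (∑ i, p i * y i) := by
      refine sum_sq_le_sum_mul_sum_of_sq_eq_mul _ (fun i _ => mul_nonneg (hp i) (hx i))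
        (fun i _ => mul_nonneg (hp i) (hy i)) (fun i _ => ?_)
      rw [mul_pow, mul_pow, Real.sq_sqrt (hx i), Real.sq_sqrt (hy i)]; ring
    have hnn : 0 ≤ ∑ i : ι, p i * (Real.sqrt (x i) * Real.sqrt (y i)) :=
      Finset.sum_nonneg fun i _ => mul_nonneg (hp i)
        (mul_nonneg (Real.sqrt_nonneg _) (Real.sqrt_nonneg _))
    calc ∑ i : ι, p i * (Real.sqrt (x i) * Real.sqrt (y i))
        = Real.sqrt ((∑ i : ι, p i * (Real.sqrt (x i) * Real.sqrt (y i))) ^ 2) :=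
          (Real.sqrt_sq hnn).symm
      _ ≤ Real.sqrt ((∑ i, p i * x i) * (∑ i, p i * y i)) := Real.sqrt_le_sqrt h2
      _ = _ := Real.sqrt_mul hX _
  have e1 : ∀ i, (Real.sqrt (x i) - Real.sqrt (y i)) ^ 2
      = x i + y i - 2 * (Real.sqrt (x i) * Real.sqrt (y i)) := fun i => by
    rw [sub_sq, Real.sq_sqrt (hx i), Real.sq_sqrt (hy i)]; ring
  have e2 : (Real.sqrt (∑ i, p i * x i) - Real.sqrt (∑ i, p i * y i)) ^ 2
      = (∑ i, p i * x i) + (∑ i, p i * y i)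
        - 2 * (Real.sqrt (∑ i, p i * x i) * Real.sqrt (∑ i, p i * y i)) := by
    rw [sub_sq, Real.sq_sqrt hX, Real.sq_sqrt hY]; ring
  simp only [e1, e2, mul_sub, mul_add, Finset.sum_sub_distrib, Finset.sum_add_distrib]
  have : ∑ i, p i * (2 * (Real.sqrt (x i) * Real.sqrt (y i)))
      = 2 * ∑ i, p i * (Real.sqrt (x i) * Real.sqrt (y i)) := by
    rw [Finset.mul_sum]; exact Finset.sum_congr rfl fun i _ => by ring
  rw [this]; linarith

end Basic

section Glue
variable {L L' : ℕ}

/-- left index: site `L - j` of the big box. -/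
def iL (L L' : ℕ) (j : Fin (L + 1)) : Fin (L + L' + 2) := ⟨L - j.1, by omega⟩
/-- right index: site `L + 1 + j` of the big box. -/
def iR (L L' : ℕ) (j : Fin (L' + 1)) : Fin (L + L' + 2) := ⟨L + 1 + j.1, by omega⟩

def glue (a : Config (L + 1)) (b : Config (L' + 1)) : Config (L + L' + 2) :=
  fun i => if h : i.1 ≤ L then a ⟨L - i.1, by omega⟩ else b ⟨i.1 - (L + 1), by omega⟩

def toL (L L' : ℕ) (η : Config (L + L' + 2)) : Config (L + 1) :=
  fun j => η ⟨L - j.1, by omega⟩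
def toR (L L' : ℕ) (η : Config (L + L' + 2)) : Config (L' + 1) :=
  fun j => η ⟨L + 1 + j.1, by omega⟩

lemma glue_iL (a : Config (L + 1)) (b : Config (L' + 1)) (j : Fin (L + 1)) :
    glue a b (iL L L' j) = a j := by
  have hj : j.1 ≤ L := by omega
  simp only [glue, iL, dif_pos (show L - j.1 ≤ L by omega)]
  erw [dif_pos (show L - j.1 ≤ L by omega)]; congr 1; exact Fin.ext (by simp only [Fin.val_mk]; omega)

lemma glue_iR (a : Config (L + 1)) (b : Config (L' + 1)) (j : Fin (L' + 1)) :
    glue a b (iR L L' j) = b j := by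
  simp only [glue, iR, dif_neg (show ¬ L + 1 + j.1 ≤ L by omega)]
  erw [dif_neg (show ¬ L + 1 + j.1 ≤ L by omega)]; congr 1; exact Fin.ext (by simp only [Fin.val_mk]; omega)

lemma toL_glue (a : Config (L + 1)) (b : Config (L' + 1)) : toL L L' (glue a b) = a := by
  funext j; exact glue_iL a b j

lemma toR_glue (a : Config (L + 1)) (b : Config (L' + 1)) : toR L L' (glue a b) = b := by
  funext j; exact glue_iR a b j

lemma glue_toL_toR (η : Config (L + L' + 2)) : glue (toL L L' η) (toR L L' η) = η := by
  funext i
  by_cases h : i.1 ≤ L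
  · simp only [glue, dif_pos h, toL]; congr 1; exact Fin.ext (by simp only [Fin.val_mk]; omega)
  · simp only [glue, dif_neg h, toR]; congr 1; exact Fin.ext (by simp only [Fin.val_mk]; omega)

/-- The splitting equivalence. -/
def eC (L L' : ℕ) : Config (L + 1) × Config (L' + 1) ≃ Config (L + L' + 2) where
  toFun p := glue p.1 p.2
  invFun η := (toL L L' η, toR L L' η)
  left_inv p := by simp [toL_glue, toR_glue]
  right_inv η := glue_toL_toR η

/-- index equivalence -/
def eI (L L' : ℕ) : Fin (L + 1) ⊕ Fin (L' + 1) ≃ Fin (L + L' + 2) where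
  toFun := Sum.elim (iL L L') (iR L L')
  invFun i := if h : i.1 ≤ L then Sum.inl ⟨L - i.1, by omega⟩ else Sum.inr ⟨i.1 - (L + 1), by omega⟩
  left_inv s := by
    rcases s with j | j
    · simp only [Sum.elim_inl, iL, dif_pos (show L - j.1 ≤ L by omega)]
      erw [dif_pos (show L - j.1 ≤ L by omega)]; congr 1; exact Fin.ext (by simp only [Fin.val_mk]; omega)
    · simp only [Sum.elim_inr, iR, dif_neg (show ¬ L + 1 + j.1 ≤ L by omega)]
      erw [dif_neg (show ¬ L + 1 + j.1 ≤ L by omega)]; congr 1; exact Fin.ext (by simp only [Fin.val_mk]; omega)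
  right_inv i := by
    by_cases h : i.1 ≤ L
    · simp only [dif_pos h, Sum.elim_inl, iL]; exact Fin.ext (by simp only [Fin.val_mk]; omega)
    · simp only [dif_neg h, Sum.elim_inr, iR]; exact Fin.ext (by simp only [Fin.val_mk]; omega)

lemma bern_glue (ρ : ℝ) (a : Config (L + 1)) (b : Config (L' + 1)) :
    bern ρ (glue a b) = bern ρ a * bern ρ b := by
  unfold bern
  rw [← Fintype.prod_equiv (eI L L')
      (fun s => if glue a b (eI L L' s) then ρ else 1 - ρ)
      (fun i => if glue a b i then ρ else 1 - ρ) (fun s => rfl),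
    Fintype.prod_sum_type]
  congr 1
  · exact Finset.prod_congr rfl fun j _ => by
      simp only [eI, Equiv.coe_fn_mk, Sum.elim_inl, glue_iL]
  · exact Finset.prod_congr rfl fun j _ => by
      simp only [eI, Equiv.coe_fn_mk, Sum.elim_inr, glue_iR]

lemma sum_glue (h : Config (L + L' + 2) → ℝ) :
    ∑ η : Config (L + L' + 2), h η
      = ∑ a : Config (L + 1), ∑ b : Config (L' + 1), h (glue a b) :=
  calc ∑ η : Config (L + L' + 2), h η
      = ∑ p : Config (L + 1) × Config (L' + 1), h (glue p.1 p.2) :=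
        (Fintype.sum_equiv (eC L L') _ _ fun p => rfl).symm
    _ = ∑ a : Config (L + 1), ∑ b : Config (L' + 1), h (glue a b) := by exact Fintype.sum_prod_type _

lemma expect_glue_mul (ρ : ℝ) (F : Config (L + 1) → ℝ) (G : Config (L' + 1) → ℝ) :
    _root_.expect ρ (fun η => F (toL L L' η) * G (toR L L' η))
      = _root_.expect ρ F * _root_.expect ρ G := by
  unfold _root_.expect
  rw [sum_glue (fun η => bern ρ η * (F (toL L L' η) * G (toR L L' η))), Finset.sum_mul_sum]
  exact Finset.sum_congr rfl fun a _ => Finset.sum_congr rfl fun b _ => by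
    rw [bern_glue, toL_glue, toR_glue]; ring

lemma flip_glue_left (a : Config (L + 1)) (b : Config (L' + 1)) (j : Fin (L + 1)) :
    flipAt (glue a b) (iL L L' j) = glue (flipAt a j) b := by
  funext i
  by_cases h : i = iL L L' j
  · subst h
    show Function.update (glue a b) _ _ _ = glue (Function.update a j (!a j)) b (iL L L' j)
    rw [Function.update_self, glue_iL, glue_iL, Function.update_self]
  · rw [show flipAt (glue a b) (iL L L' j) i = glue a b i from Function.update_of_ne h _ _]
    show glue a b i = glue (Function.update a j (!a j)) b i
    by_cases hi : i.1 ≤ L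
    · have hne : (⟨L - i.1, by omega⟩ : Fin (L + 1)) ≠ j := by
        intro hc
        apply h; apply Fin.ext
        have := congrArg Fin.val hc
        simp only [Fin.val_mk] at this
        simp only [iL, Fin.val_mk]; omega
      simp only [glue, dif_pos hi]
      rw [Function.update_of_ne hne]
    · simp only [glue, dif_neg hi]

lemma flip_glue_right (a : Config (L + 1)) (b : Config (L' + 1)) (j : Fin (L' + 1)) :
    flipAt (glue a b) (iR L L' j) = glue a (flipAt b j) := by
  funext i
  by_cases h : i = iR L L' j
  · subst h
    show Function.update (glue a b) _ _ _ = glue a (Function.update b j (!b j)) (iR L L' j)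
    rw [Function.update_self, glue_iR, glue_iR, Function.update_self]
  · rw [show flipAt (glue a b) (iR L L' j) i = glue a b i from Function.update_of_ne h _ _]
    show glue a b i = glue a (Function.update b j (!b j)) i
    by_cases hi : i.1 ≤ L
    · simp only [glue, dif_pos hi]
    · have hne : (⟨i.1 - (L + 1), by omega⟩ : Fin (L' + 1)) ≠ j := by
        intro hc
        apply h; apply Fin.ext
        have := congrArg Fin.val hc
        simp only [Fin.val_mk] at this
        simp only [iR, Fin.val_mk]; omega
      simp only [glue, dif_neg hi]
      rw [Function.update_of_ne hne]

end Glue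

section OccEval
variable {N : ℕ}

lemma occAt_eval (η : Config N) (bl br : ℝ) (k : ℕ) (h1 : k ≠ 0) (h2 : k ≤ N) :
    occAt η bl br k = if η ⟨k - 1, by omega⟩ then 1 else 0 := by
  unfold occAt; rw [dif_neg h1, dif_pos h2]

lemma occAt_zero (η : Config N) (bl br : ℝ) : occAt η bl br 0 = bl := dif_pos rfl

lemma occAt_big (η : Config N) (bl br : ℝ) {k : ℕ} (h : N < k) : occAt η bl br k = br := by
  unfold occAt; rw [dif_neg (by omega), dif_neg (by omega)]

end OccEval

section Crate
variable {L L' : ℕ}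

lemma occAt_glue_left (a : Config (L + 1)) (b : Config (L' + 1)) (k : ℕ) (h1 : k ≠ 0)
    (h2 : k ≤ L + 1) : occAt (glue a b) 0 0 k = occAt a 1 0 (L + 2 - k) := by
  rw [occAt_eval (glue a b) 0 0 k h1 (by omega), occAt_eval a 1 0 (L + 2 - k) (by omega) (by omega)]
  have e1 : glue a b ⟨k - 1, by omega⟩ = a ⟨L - (k - 1), by omega⟩ :=
    dif_pos (show k - 1 ≤ L by omega)
  have e2 : (⟨L - (k - 1), by omega⟩ : Fin (L + 1)) = ⟨L + 2 - k - 1, by omega⟩ :=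
    Fin.ext (by simp only [Fin.val_mk]; omega)
  rw [e1, e2]

lemma occAt_glue_right (a : Config (L + 1)) (b : Config (L' + 1)) (k : ℕ) (h1 : L + 2 ≤ k)
    (h2 : k ≤ L + L' + 2) : occAt (glue a b) 0 0 k = occAt b 1 0 (k - (L + 1)) := by
  rw [occAt_eval (glue a b) 0 0 k (by omega) (by omega),
    occAt_eval b 1 0 (k - (L + 1)) (by omega) (by omega)]
  have e1 : glue a b ⟨k - 1, by omega⟩ = b ⟨k - 1 - (L + 1), by omega⟩ :=
    dif_neg (show ¬ k - 1 ≤ L by omega)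
  have e2 : (⟨k - 1 - (L + 1), by omega⟩ : Fin (L' + 1)) = ⟨k - (L + 1) - 1, by omega⟩ :=
    Fin.ext (by simp only [Fin.val_mk]; omega)
  rw [e1, e2]

lemma crate_left (ρ : ℝ) (a : Config (L + 1)) (b : Config (L' + 1)) (j : Fin (L + 1))
    (hb : j.1 = 0 → b ⟨0, by omega⟩ = true) :
    crate KCM.fa2 ρ (glue a b) (iL L L' j) = crate KCM.fa1 ρ a j := by
  unfold crate
  rw [glue_iL a b j]
  congr 1
  show 1 - occAt (glue a b) 0 0 (iL L L' j).1 * occAt (glue a b) 0 0 ((iL L L' j).1 + 2)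
      = 1 - occAt a 1 0 j.1 * occAt a 1 0 (j.1 + 2)
  have hiL : (iL L L' j).1 = L - j.1 := rfl
  rw [hiL]
  rcases Nat.eq_zero_or_pos j.1 with hj0 | hjpos
  · rcases Nat.eq_zero_or_pos L with hL0 | hLpos
    · rw [show L - j.1 = 0 by omega, occAt_zero,
        occAt_big a 1 0 (show L + 1 < j.1 + 2 by omega)]
      ring
    · rw [hj0, Nat.sub_zero, occAt_glue_left a b L (by omega) (by omega),
        occAt_glue_right a b (L + 2) (by omega) (by omega), occAt_zero,
        show L + 2 - L = 2 by omega, show L + 2 - (L + 1) = 1 by omega,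
        occAt_eval b 1 0 1 (by omega) (by omega)]
      rw [show (⟨1 - 1, by omega⟩ : Fin (L' + 1)) = ⟨0, by omega⟩ from rfl, hb hj0]
      norm_num
  · rcases Nat.lt_or_ge j.1 L with hjL | hjL
    · rw [occAt_glue_left a b (L - j.1) (by omega) (by omega),
        occAt_glue_left a b (L - j.1 + 2) (by omega) (by omega),
        show L + 2 - (L - j.1) = j.1 + 2 by omega,
        show L + 2 - (L - j.1 + 2) = j.1 by omega]
      ring
    · have hjL' : j.1 = L := by omega
      rw [show L - j.1 = 0 by omega, occAt_zero,
        occAt_big a 1 0 (show L + 1 < j.1 + 2 by omega)]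
      ring

lemma crate_right (ρ : ℝ) (a : Config (L + 1)) (b : Config (L' + 1)) (j : Fin (L' + 1))
    (ha : j.1 = 0 → a ⟨0, by omega⟩ = true) :
    crate KCM.fa2 ρ (glue a b) (iR L L' j) = crate KCM.fa1 ρ b j := by
  unfold crate
  rw [glue_iR a b j]
  congr 1
  show 1 - occAt (glue a b) 0 0 (iR L L' j).1 * occAt (glue a b) 0 0 ((iR L L' j).1 + 2)
      = 1 - occAt b 1 0 j.1 * occAt b 1 0 (j.1 + 2)
  have hiR : (iR L L' j).1 = L + 1 + j.1 := rfl
  rw [hiR]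
  rcases Nat.eq_zero_or_pos j.1 with hj0 | hjpos
  · have h1 : occAt (glue a b) 0 0 (L + 1 + j.1) = 1 := by
      rw [show L + 1 + j.1 = L + 1 by omega, occAt_glue_left a b (L + 1) (by omega) (by omega),
        show L + 2 - (L + 1) = 1 by omega, occAt_eval a 1 0 1 (by omega) (by omega)]
      rw [show (⟨1 - 1, by omega⟩ : Fin (L + 1)) = ⟨0, by omega⟩ from rfl, ha hj0]
      norm_num
    rw [h1, hj0, occAt_zero]
    rcases Nat.lt_or_ge L' 1 with hL0 | hLpos
    · rw [occAt_big (glue a b) 0 0 (show L + L' + 2 < L + 1 + 0 + 2 by omega),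
        occAt_big b 1 0 (show L' + 1 < 0 + 2 by omega)]
    · rw [occAt_glue_right a b (L + 1 + 0 + 2) (by omega) (by omega),
        show L + 1 + 0 + 2 - (L + 1) = 0 + 2 by omega]
  · rw [occAt_glue_right a b (L + 1 + j.1) (by omega) (by omega),
      show L + 1 + j.1 - (L + 1) = j.1 by omega]
    rcases Nat.lt_or_ge j.1 L' with hjL | hjL
    · rw [occAt_glue_right a b (L + 1 + j.1 + 2) (by omega) (by omega),
        show L + 1 + j.1 + 2 - (L + 1) = j.1 + 2 by omega]
    · have hjL' : j.1 = L' := by omega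
      rw [occAt_big (glue a b) 0 0 (show L + L' + 2 < L + 1 + j.1 + 2 by omega),
        occAt_big b 1 0 (show L' + 1 < j.1 + 2 by omega)]

end Crate

section Support
variable {ρ : ℝ} {N : ℕ}

lemma support_lemma (h0 : 0 < ρ) (h1 : ρ < 1) {f w : Config N → ℝ} (hf : ∀ η, 0 ≤ f η)
    (hw : ∀ η, w η = 0 ∨ w η = 1) (hE : _root_.expect ρ f = 1)
    (hEw : _root_.expect ρ (fun η => f η * w η) = 1) :
    ∀ η, f η ≠ 0 → w η = 1 := by
  have hzero : _root_.expect ρ (fun η => f η * (1 - w η)) = 0 := by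
    have : _root_.expect ρ (fun η => f η * (1 - w η))
        = _root_.expect ρ f - _root_.expect ρ (fun η => f η * w η) := by
      unfold _root_.expect
      rw [← Finset.sum_sub_distrib]
      exact Finset.sum_congr rfl fun η _ => by ring
    rw [this, hE, hEw]; ring
  have hterm : ∀ η ∈ (Finset.univ : Finset (Config N)),
      0 ≤ bern ρ η * (f η * (1 - w η)) := fun η _ => by
    rcases hw η with h | h <;>
      · rw [h]; first
          | (apply mul_nonneg (bern_nonneg h0 h1 η); apply mul_nonneg (hf η); norm_num)
  have := (Finset.sum_eq_zero_iff_of_nonneg hterm).1 hzero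
  intro η hfη
  rcases hw η with h | h
  · exfalso
    have h2 := this η (Finset.mem_univ η)
    rw [h] at h2
    have := bern_pos h0 h1 η
    have : f η = 0 := by
      rcases mul_eq_zero.1 h2 with h3 | h3
      · linarith
      · rcases mul_eq_zero.1 h3 with h4 | h4
        · exact h4
        · linarith
    exact hfη this
  · exact h

end Support

section MainIneq
variable {L L' : ℕ}

/-- left marginal -/
noncomputable def margL (ρ : ℝ) (f : Config (L + L' + 2) → ℝ) (a : Config (L + 1)) : ℝ :=
  ∑ b : Config (L' + 1), bern ρ b * f (glue a b)

/-- right marginal -/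
noncomputable def margR (ρ : ℝ) (f : Config (L + L' + 2) → ℝ) (b : Config (L' + 1)) : ℝ :=
  ∑ a : Config (L + 1), bern ρ a * f (glue a b)

lemma dirichlet_split (ρ : ℝ) (g : Config (L + L' + 2) → ℝ) :
    dirichlet KCM.fa2 ρ g
      = (∑ j : Fin (L + 1), _root_.expect ρ
          (fun η => crate KCM.fa2 ρ η (iL L L' j) * (g (flipAt η (iL L L' j)) - g η) ^ 2))
        + ∑ j : Fin (L' + 1), _root_.expect ρ
          (fun η => crate KCM.fa2 ρ η (iR L L' j) * (g (flipAt η (iR L L' j)) - g η) ^ 2) := by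
  unfold dirichlet
  rw [← Fintype.sum_equiv (eI L L')
      (fun s => _root_.expect ρ
        (fun η => crate KCM.fa2 ρ η (eI L L' s) * (g (flipAt η (eI L L' s)) - g η) ^ 2))
      (fun i => _root_.expect ρ
        (fun η => crate KCM.fa2 ρ η i * (g (flipAt η i) - g η) ^ 2))
      (fun s => rfl), Fintype.sum_sum_type]
  rfl

variable {ρ : ℝ}

lemma left_site_le (h0 : 0 < ρ) (h1 : ρ < 1) (f : Config (L + L' + 2) → ℝ)
    (hf : ∀ η, 0 ≤ f η)
    (hsupp : ∀ η, f η ≠ 0 → η (iL L L' ⟨0, by omega⟩) = true ∧ η (iR L L' ⟨0, by omega⟩) = true)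
    (j : Fin (L + 1)) :
    _root_.expect ρ (fun a => crate KCM.fa1 ρ a j *
        (Real.sqrt (margL ρ f (flipAt a j)) - Real.sqrt (margL ρ f a)) ^ 2)
      ≤ _root_.expect ρ (fun η => crate KCM.fa2 ρ η (iL L L' j) *
        (Real.sqrt (f (flipAt η (iL L L' j))) - Real.sqrt (f η)) ^ 2) := by
  unfold _root_.expect
  rw [sum_glue (fun η => bern ρ η * (crate KCM.fa2 ρ η (iL L L' j) *
    (Real.sqrt (f (flipAt η (iL L L' j))) - Real.sqrt (f η)) ^ 2))]
  apply Finset.sum_le_sum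
  intro a _
  have key : ∀ b : Config (L' + 1),
      bern ρ (glue a b) * (crate KCM.fa2 ρ (glue a b) (iL L L' j) *
        (Real.sqrt (f (flipAt (glue a b) (iL L L' j))) - Real.sqrt (f (glue a b))) ^ 2)
      = bern ρ a * (crate KCM.fa1 ρ a j * (bern ρ b *
        (Real.sqrt (f (glue (flipAt a j) b)) - Real.sqrt (f (glue a b))) ^ 2)) := by
    intro b
    rw [bern_glue, flip_glue_left]
    by_cases hj : j.1 = 0
    · by_cases hb0 : b ⟨0, by omega⟩ = true
      · rw [crate_left ρ a b j (fun _ => hb0)]; ring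
      · have hx : f (glue a b) = 0 := by
          by_contra hne
          exact hb0 ((glue_iR a b ⟨0, by omega⟩) ▸ (hsupp _ hne).2)
        have hy : f (glue (flipAt a j) b) = 0 := by
          by_contra hne
          exact hb0 ((glue_iR (flipAt a j) b ⟨0, by omega⟩) ▸ (hsupp _ hne).2)
        rw [hx, hy]
        simp
    · rw [crate_left ρ a b j (fun h => absurd h hj)]; ring
  calc bern ρ a * (crate KCM.fa1 ρ a j *
        (Real.sqrt (margL ρ f (flipAt a j)) - Real.sqrt (margL ρ f a)) ^ 2)
      ≤ bern ρ a * (crate KCM.fa1 ρ a j *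
        (∑ b : Config (L' + 1), bern ρ b *
          (Real.sqrt (f (glue (flipAt a j) b)) - Real.sqrt (f (glue a b))) ^ 2)) := by
        apply mul_le_mul_of_nonneg_left _ (bern_nonneg h0 h1 a)
        apply mul_le_mul_of_nonneg_left _ (crate_nonneg KCM.fa1 h0 h1 a j)
        exact sqrt_sum_sub_sqrt_sum_sq_le (fun b => bern ρ b)
          (fun b => f (glue (flipAt a j) b)) (fun b => f (glue a b))
          (fun b => bern_nonneg h0 h1 b) (fun b => hf _) (fun b => hf _)
    _ = ∑ b : Config (L' + 1), bern ρ (glue a b) * (crate KCM.fa2 ρ (glue a b) (iL L L' j) *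
        (Real.sqrt (f (flipAt (glue a b) (iL L L' j))) - Real.sqrt (f (glue a b))) ^ 2) := by
        rw [Finset.sum_congr rfl (fun b _ => key b), ← Finset.mul_sum, ← Finset.mul_sum]

lemma right_site_le (h0 : 0 < ρ) (h1 : ρ < 1) (f : Config (L + L' + 2) → ℝ)
    (hf : ∀ η, 0 ≤ f η)
    (hsupp : ∀ η, f η ≠ 0 → η (iL L L' ⟨0, by omega⟩) = true ∧ η (iR L L' ⟨0, by omega⟩) = true)
    (j : Fin (L' + 1)) :
    _root_.expect ρ (fun b => crate KCM.fa1 ρ b j *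
        (Real.sqrt (margR ρ f (flipAt b j)) - Real.sqrt (margR ρ f b)) ^ 2)
      ≤ _root_.expect ρ (fun η => crate KCM.fa2 ρ η (iR L L' j) *
        (Real.sqrt (f (flipAt η (iR L L' j))) - Real.sqrt (f η)) ^ 2) := by
  unfold _root_.expect
  rw [sum_glue (fun η => bern ρ η * (crate KCM.fa2 ρ η (iR L L' j) *
    (Real.sqrt (f (flipAt η (iR L L' j))) - Real.sqrt (f η)) ^ 2)), Finset.sum_comm]
  apply Finset.sum_le_sum
  intro b _
  have key : ∀ a : Config (L + 1),
      bern ρ (glue a b) * (crate KCM.fa2 ρ (glue a b) (iR L L' j) *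
        (Real.sqrt (f (flipAt (glue a b) (iR L L' j))) - Real.sqrt (f (glue a b))) ^ 2)
      = bern ρ b * (crate KCM.fa1 ρ b j * (bern ρ a *
        (Real.sqrt (f (glue a (flipAt b j))) - Real.sqrt (f (glue a b))) ^ 2)) := by
    intro a
    rw [bern_glue, flip_glue_right]
    by_cases hj : j.1 = 0
    · by_cases ha0 : a ⟨0, by omega⟩ = true
      · rw [crate_right ρ a b j (fun _ => ha0)]; ring
      · have hx : f (glue a b) = 0 := by
          by_contra hne
          exact ha0 ((glue_iL a b ⟨0, by omega⟩) ▸ (hsupp _ hne).1)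
        have hy : f (glue a (flipAt b j)) = 0 := by
          by_contra hne
          exact ha0 ((glue_iL a (flipAt b j) ⟨0, by omega⟩) ▸ (hsupp _ hne).1)
        rw [hx, hy]
        simp
    · rw [crate_right ρ a b j (fun h => absurd h hj)]; ring
  calc bern ρ b * (crate KCM.fa1 ρ b j *
        (Real.sqrt (margR ρ f (flipAt b j)) - Real.sqrt (margR ρ f b)) ^ 2)
      ≤ bern ρ b * (crate KCM.fa1 ρ b j *
        (∑ a : Config (L + 1), bern ρ a *
          (Real.sqrt (f (glue a (flipAt b j))) - Real.sqrt (f (glue a b))) ^ 2)) := by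
        apply mul_le_mul_of_nonneg_left _ (bern_nonneg h0 h1 b)
        apply mul_le_mul_of_nonneg_left _ (crate_nonneg KCM.fa1 h0 h1 b j)
        exact sqrt_sum_sub_sqrt_sum_sq_le (fun a => bern ρ a)
          (fun a => f (glue a (flipAt b j))) (fun a => f (glue a b))
          (fun a => bern_nonneg h0 h1 a) (fun a => hf _) (fun a => hf _)
    _ = ∑ a : Config (L + 1), bern ρ (glue a b) * (crate KCM.fa2 ρ (glue a b) (iR L L' j) *
        (Real.sqrt (f (flipAt (glue a b) (iR L L' j))) - Real.sqrt (f (glue a b))) ^ 2) := by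
        rw [Finset.sum_congr rfl (fun a _ => key a), ← Finset.mul_sum, ← Finset.mul_sum]

/-- Lower bound: the two-boundary Dirichlet form dominates the sum of the two
one-boundary Dirichlet forms of the marginals. -/
lemma dirichlet_marg_le (h0 : 0 < ρ) (h1 : ρ < 1) (f : Config (L + L' + 2) → ℝ)
    (hf : ∀ η, 0 ≤ f η)
    (hsupp : ∀ η, f η ≠ 0 → η (iL L L' ⟨0, by omega⟩) = true ∧ η (iR L L' ⟨0, by omega⟩) = true) :
    dirichlet KCM.fa1 ρ (fun a => Real.sqrt (margL ρ f a))
      + dirichlet KCM.fa1 ρ (fun b => Real.sqrt (margR ρ f b))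
      ≤ dirichlet KCM.fa2 ρ (fun η => Real.sqrt (f η)) := by
  rw [dirichlet_split]
  unfold dirichlet
  exact add_le_add
    (Finset.sum_le_sum fun j _ => left_site_le h0 h1 f hf hsupp j)
    (Finset.sum_le_sum fun j _ => right_site_le h0 h1 f hf hsupp j)

/-- Upper bound: product functions give an exact splitting. -/
lemma dirichlet_prod_eq (h0 : 0 < ρ) (h1 : ρ < 1)
    (fa : Config (L + 1) → ℝ) (fb : Config (L' + 1) → ℝ)
    (hfa : ∀ a, 0 ≤ fa a) (hfb : ∀ b, 0 ≤ fb b)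
    (hsa : ∀ a, fa a ≠ 0 → a ⟨0, by omega⟩ = true)
    (hsb : ∀ b, fb b ≠ 0 → b ⟨0, by omega⟩ = true)
    (hEa : _root_.expect ρ fa = 1) (hEb : _root_.expect ρ fb = 1) :
    dirichlet KCM.fa2 ρ (fun η => Real.sqrt (fa (toL L L' η) * fb (toR L L' η)))
      = dirichlet KCM.fa1 ρ (fun a => Real.sqrt (fa a))
        + dirichlet KCM.fa1 ρ (fun b => Real.sqrt (fb b)) := by
  rw [dirichlet_split]
  unfold dirichlet
  congr 1
  · apply Finset.sum_congr rfl
    intro j _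
    show _root_.expect ρ _ = _root_.expect ρ _
    unfold _root_.expect
    rw [sum_glue (fun η => bern ρ η * (crate KCM.fa2 ρ η (iL L L' j) *
      (Real.sqrt (fa (toL L L' (flipAt η (iL L L' j))) * fb (toR L L' (flipAt η (iL L L' j))))
        - Real.sqrt (fa (toL L L' η) * fb (toR L L' η))) ^ 2))]
    apply Finset.sum_congr rfl
    intro a _
    have key : ∀ b : Config (L' + 1),
        bern ρ (glue a b) * (crate KCM.fa2 ρ (glue a b) (iL L L' j) *
          (Real.sqrt (fa (toL L L' (flipAt (glue a b) (iL L L' j)))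
              * fb (toR L L' (flipAt (glue a b) (iL L L' j))))
            - Real.sqrt (fa (toL L L' (glue a b)) * fb (toR L L' (glue a b)))) ^ 2)
        = bern ρ a * (crate KCM.fa1 ρ a j *
            (Real.sqrt (fa (flipAt a j)) - Real.sqrt (fa a)) ^ 2) * (bern ρ b * fb b) := by
      intro b
      rw [bern_glue, flip_glue_left, toL_glue, toR_glue, toL_glue, toR_glue,
        Real.sqrt_mul (hfa _), Real.sqrt_mul (hfa _)]
      have hsq : (Real.sqrt (fa (flipAt a j)) * Real.sqrt (fb b)
          - Real.sqrt (fa a) * Real.sqrt (fb b)) ^ 2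
          = (Real.sqrt (fa (flipAt a j)) - Real.sqrt (fa a)) ^ 2 * fb b := by
        rw [show Real.sqrt (fa (flipAt a j)) * Real.sqrt (fb b)
            - Real.sqrt (fa a) * Real.sqrt (fb b)
            = (Real.sqrt (fa (flipAt a j)) - Real.sqrt (fa a)) * Real.sqrt (fb b) by ring,
          mul_pow, Real.sq_sqrt (hfb b)]
      rw [hsq]
      by_cases hj : j.1 = 0
      · by_cases hb0 : b ⟨0, by omega⟩ = true
        · rw [crate_left ρ a b j (fun _ => hb0)]; ring
        · have hb' : fb b = 0 := by
            by_contra hne; exact hb0 (hsb b hne)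
          rw [hb']; ring
      · rw [crate_left ρ a b j (fun h => absurd h hj)]; ring
    have hEb' : ∑ b : Config (L' + 1), bern ρ b * fb b = 1 := hEb
    rw [Finset.sum_congr rfl (fun b _ => key b), ← Finset.mul_sum, hEb', mul_one]
  · apply Finset.sum_congr rfl
    intro j _
    show _root_.expect ρ _ = _root_.expect ρ _
    unfold _root_.expect
    rw [sum_glue (fun η => bern ρ η * (crate KCM.fa2 ρ η (iR L L' j) *
      (Real.sqrt (fa (toL L L' (flipAt η (iR L L' j))) * fb (toR L L' (flipAt η (iR L L' j))))
        - Real.sqrt (fa (toL L L' η) * fb (toR L L' η))) ^ 2)), Finset.sum_comm]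
    apply Finset.sum_congr rfl
    intro b _
    have key : ∀ a : Config (L + 1),
        bern ρ (glue a b) * (crate KCM.fa2 ρ (glue a b) (iR L L' j) *
          (Real.sqrt (fa (toL L L' (flipAt (glue a b) (iR L L' j)))
              * fb (toR L L' (flipAt (glue a b) (iR L L' j))))
            - Real.sqrt (fa (toL L L' (glue a b)) * fb (toR L L' (glue a b)))) ^ 2)
        = bern ρ b * (crate KCM.fa1 ρ b j *
            (Real.sqrt (fb (flipAt b j)) - Real.sqrt (fb b)) ^ 2) * (bern ρ a * fa a) := by
      intro a
      rw [bern_glue, flip_glue_right, toL_glue, toR_glue, toL_glue, toR_glue,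
        Real.sqrt_mul (hfa _), Real.sqrt_mul (hfa _)]
      have hsq : (Real.sqrt (fa a) * Real.sqrt (fb (flipAt b j))
          - Real.sqrt (fa a) * Real.sqrt (fb b)) ^ 2
          = (Real.sqrt (fb (flipAt b j)) - Real.sqrt (fb b)) ^ 2 * fa a := by
        rw [show Real.sqrt (fa a) * Real.sqrt (fb (flipAt b j))
            - Real.sqrt (fa a) * Real.sqrt (fb b)
            = (Real.sqrt (fb (flipAt b j)) - Real.sqrt (fb b)) * Real.sqrt (fa a) by ring,
          mul_pow, Real.sq_sqrt (hfa a)]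
      rw [hsq]
      by_cases hj : j.1 = 0
      · by_cases ha0 : a ⟨0, by omega⟩ = true
        · rw [crate_right ρ a b j (fun _ => ha0)]; ring
        · have ha' : fa a = 0 := by
            by_contra hne; exact ha0 (hsa a hne)
          rw [ha']; ring
      · rw [crate_right ρ a b j (fun h => absurd h hj)]; ring
    have hEa' : ∑ a : Config (L + 1), bern ρ a * fa a = 1 := hEa
    rw [Finset.sum_congr rfl (fun a _ => key a), ← Finset.mul_sum, hEa', mul_one]

end MainIneq

section Sets
variable {ρ : ℝ}

def oneSet (m : KCM) (ρ : ℝ) (L : ℕ) : Set ℝ :=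
  { x | ∃ f : Config L → ℝ, (∀ η, 0 ≤ f η) ∧ _root_.expect ρ f = 1 ∧
    _root_.expect ρ (fun η => f η * occAt η 0 0 1) = 1 ∧
    x = dirichlet m ρ (fun η => Real.sqrt (f η)) }

def twoSet (ρ : ℝ) (L L' : ℕ) : Set ℝ :=
  { x | ∃ f : Config (L + L' + 2) → ℝ, (∀ η, 0 ≤ f η) ∧ _root_.expect ρ f = 1 ∧
    _root_.expect ρ (fun η => f η * occ η ⟨L, by omega⟩ * occ η ⟨L + 1, by omega⟩) = 1 ∧
    x = dirichlet KCM.fa2 ρ (fun η => Real.sqrt (f η)) }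

lemma SigmaOne_def (m : KCM) (L : ℕ) : SigmaOne m ρ L = sInf (oneSet m ρ L) := rfl

lemma SigmaTwo_def (L L' : ℕ) : SigmaTwo ρ L L' = sInf (twoSet ρ L L') := rfl

lemma oneSet_bdd (m : KCM) (h0 : 0 < ρ) (h1 : ρ < 1) (L : ℕ) : BddBelow (oneSet m ρ L) := by
  refine ⟨0, fun x hx => ?_⟩
  obtain ⟨f, _, _, _, hxv⟩ := hx
  rw [hxv]; exact dirichlet_nonneg m h0 h1 _

lemma twoSet_bdd (h0 : 0 < ρ) (h1 : ρ < 1) (L L' : ℕ) : BddBelow (twoSet ρ L L') := by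
  refine ⟨0, fun x hx => ?_⟩
  obtain ⟨f, _, _, _, hxv⟩ := hx
  rw [hxv]; exact dirichlet_nonneg _ h0 h1 _

/-- normalized indicator of a (0,1)-valued weight with nonempty support -/
lemma indicator_feasible (h0 : 0 < ρ) (h1 : ρ < 1) {N : ℕ} (w : Config N → ℝ)
    (hw : ∀ η, w η = 0 ∨ w η = 1) (hex : ∃ η, w η = 1) :
    ∃ f : Config N → ℝ, (∀ η, 0 ≤ f η) ∧ _root_.expect ρ f = 1 ∧ (∀ η, f η * w η = f η) := by
  obtain ⟨η₀, hη₀⟩ := hex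
  have hwnn : ∀ η, 0 ≤ w η := fun η => by rcases hw η with h | h <;> rw [h] <;> norm_num
  have hZ : 0 < _root_.expect ρ w := by
    apply Finset.sum_pos' (fun η _ => mul_nonneg (bern_nonneg h0 h1 η) (hwnn η))
    exact ⟨η₀, Finset.mem_univ _, by rw [hη₀, mul_one]; exact bern_pos h0 h1 η₀⟩
  refine ⟨fun η => w η / _root_.expect ρ w,
    fun η => div_nonneg (hwnn η) hZ.le, ?_, fun η => ?_⟩
  · show ∑ η, bern ρ η * (w η / _root_.expect ρ w) = 1
    have : ∑ η, bern ρ η * (w η / _root_.expect ρ w)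
        = (∑ η, bern ρ η * w η) / _root_.expect ρ w := by
      rw [Finset.sum_div]; exact Finset.sum_congr rfl fun η _ => by ring
    rw [this]; exact div_self hZ.ne'
  · rcases hw η with h | h
    · rw [h]; norm_num [h]
    · rw [h, mul_one]

lemma oneSet_nonempty (h0 : 0 < ρ) (h1 : ρ < 1) (n : ℕ) :
    (oneSet KCM.fa1 ρ (n + 1)).Nonempty := by
  obtain ⟨f, hf, hE, hfw⟩ := indicator_feasible h0 h1 (fun η : Config (n + 1) => occAt η 0 0 1)
    (fun η => occAt_mem η (Or.inl rfl) (Or.inl rfl) 1)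
    ⟨fun _ => true, by
      show occAt (fun _ : Fin (n + 1) => true) 0 0 1 = 1
      rw [occAt_eval _ 0 0 1 one_ne_zero (by omega)]; simp⟩
  refine ⟨dirichlet KCM.fa1 ρ (fun η => Real.sqrt (f η)), f, hf, hE, ?_, rfl⟩
  rw [show (fun η => f η * occAt η 0 0 1) = f from funext hfw, hE]

lemma twoSet_nonempty (h0 : 0 < ρ) (h1 : ρ < 1) (L L' : ℕ) :
    (twoSet ρ L L').Nonempty := by
  have hw : ∀ η : Config (L + L' + 2),
      occ η ⟨L, by omega⟩ * occ η ⟨L + 1, by omega⟩ = 0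
        ∨ occ η ⟨L, by omega⟩ * occ η ⟨L + 1, by omega⟩ = 1 := fun η => by
    unfold occ; split_ifs <;> norm_num
  obtain ⟨f, hf, hE, hfw⟩ := indicator_feasible h0 h1
    (fun η : Config (L + L' + 2) => occ η ⟨L, by omega⟩ * occ η ⟨L + 1, by omega⟩) hw
    ⟨fun _ => true, by unfold occ; norm_num⟩
  refine ⟨dirichlet KCM.fa2 ρ (fun η => Real.sqrt (f η)), f, hf, hE, ?_, rfl⟩
  have : (fun η : Config (L + L' + 2) =>
      f η * occ η ⟨L, by omega⟩ * occ η ⟨L + 1, by omega⟩) = f := by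
    funext η
    rw [mul_assoc]
    exact hfw η
  rw [this, hE]

end Sets

section Transfer
variable {ρ : ℝ} {L L' : ℕ}

lemma expect_margL (f : Config (L + L' + 2) → ℝ) :
    _root_.expect ρ (margL ρ f) = _root_.expect ρ f := by
  unfold _root_.expect margL
  rw [sum_glue (fun η => bern ρ η * f η)]
  refine Finset.sum_congr rfl fun a _ => ?_
  rw [Finset.mul_sum]
  exact Finset.sum_congr rfl fun b _ => by rw [bern_glue]; ring

lemma expect_margR (f : Config (L + L' + 2) → ℝ) :
    _root_.expect ρ (margR ρ f) = _root_.expect ρ f := by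
  unfold _root_.expect margR
  rw [sum_glue (fun η => bern ρ η * f η), Finset.sum_comm]
  refine Finset.sum_congr rfl fun b _ => ?_
  rw [Finset.mul_sum]
  exact Finset.sum_congr rfl fun a _ => by rw [bern_glue]; ring

lemma support_one (h0 : 0 < ρ) (h1 : ρ < 1) {n : ℕ} {f : Config (n + 1) → ℝ}
    (hf : ∀ η, 0 ≤ f η) (hE : _root_.expect ρ f = 1)
    (hEw : _root_.expect ρ (fun η => f η * occAt η 0 0 1) = 1) :
    ∀ η, f η ≠ 0 → η ⟨0, by omega⟩ = true := by
  intro η hne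
  have := support_lemma h0 h1 hf
    (fun η => occAt_mem η (Or.inl rfl) (Or.inl rfl) 1) hE hEw η hne
  rw [occAt_eval _ 0 0 1 one_ne_zero (by omega)] at this
  by_cases hc : η ⟨0, by omega⟩ = true
  · exact hc
  · exfalso
    rw [if_neg (show ¬ (η ⟨1 - 1, by omega⟩ = true) from hc)] at this
    norm_num at this

lemma support_two (h0 : 0 < ρ) (h1 : ρ < 1) {f : Config (L + L' + 2) → ℝ}
    (hf : ∀ η, 0 ≤ f η) (hE : _root_.expect ρ f = 1)
    (hEw : _root_.expect ρ (fun η => f η * occ η ⟨L, by omega⟩ * occ η ⟨L + 1, by omega⟩) = 1) :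
    ∀ η, f η ≠ 0 → η (iL L L' ⟨0, by omega⟩) = true ∧ η (iR L L' ⟨0, by omega⟩) = true := by
  intro η hne
  have hEw' : _root_.expect ρ
      (fun η => f η * (occ η ⟨L, by omega⟩ * occ η ⟨L + 1, by omega⟩)) = 1 := by
    rw [show (fun η : Config (L + L' + 2) =>
        f η * (occ η ⟨L, by omega⟩ * occ η ⟨L + 1, by omega⟩))
      = fun η => f η * occ η ⟨L, by omega⟩ * occ η ⟨L + 1, by omega⟩ from
        funext fun η => by ring]
    exact hEw
  have key := support_lemma h0 h1 hf
    (fun η => by unfold occ; split_ifs <;> norm_num) hE hEw' η hne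
  unfold occ at key
  by_cases c1 : η ⟨L, by omega⟩ = true
  · by_cases c2 : η ⟨L + 1, by omega⟩ = true
    · exact ⟨c1, c2⟩
    · exfalso; rw [if_neg c2, mul_zero] at key; norm_num at key
  · exfalso; rw [if_neg c1, zero_mul] at key; norm_num at key

lemma twoSet_to_marg (h0 : 0 < ρ) (h1 : ρ < 1) {z : ℝ} (hz : z ∈ twoSet ρ L L') :
    ∃ x ∈ oneSet KCM.fa1 ρ (L + 1), ∃ y ∈ oneSet KCM.fa1 ρ (L' + 1), x + y ≤ z := by
  obtain ⟨f, hf, hE, hEw, hzv⟩ := hz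
  have hsupp := support_two h0 h1 hf hE hEw
  have hmLnn : ∀ a, 0 ≤ margL ρ f a := fun a =>
    Finset.sum_nonneg fun b _ => mul_nonneg (bern_nonneg h0 h1 b) (hf _)
  have hmRnn : ∀ b, 0 ≤ margR ρ f b := fun b =>
    Finset.sum_nonneg fun a _ => mul_nonneg (bern_nonneg h0 h1 a) (hf _)
  have hmLE : _root_.expect ρ (margL ρ f) = 1 := (expect_margL f).trans hE
  have hmRE : _root_.expect ρ (margR ρ f) = 1 := (expect_margR f).trans hE
  have hmLzero : ∀ a : Config (L + 1), a ⟨0, by omega⟩ ≠ true → margL ρ f a = 0 := by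
    intro a ha
    apply Finset.sum_eq_zero
    intro b _
    have : f (glue a b) = 0 := by
      by_contra hne
      exact ha ((glue_iL a b ⟨0, by omega⟩) ▸ (hsupp _ hne).1)
    rw [this, mul_zero]
  have hmRzero : ∀ b : Config (L' + 1), b ⟨0, by omega⟩ ≠ true → margR ρ f b = 0 := by
    intro b hb
    apply Finset.sum_eq_zero
    intro a _
    have : f (glue a b) = 0 := by
      by_contra hne
      exact hb ((glue_iR a b ⟨0, by omega⟩) ▸ (hsupp _ hne).2)
    rw [this, mul_zero]
  have hmLw : _root_.expect ρ (fun a => margL ρ f a * occAt a 0 0 1) = 1 := by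
    rw [show (fun a : Config (L + 1) => margL ρ f a * occAt a 0 0 1) = margL ρ f from ?_, hmLE]
    funext a
    rw [occAt_eval _ 0 0 1 one_ne_zero (by omega)]
    by_cases hc : a ⟨0, by omega⟩ = true
    · rw [if_pos (show a ⟨1 - 1, by omega⟩ = true from hc), mul_one]
    · rw [hmLzero a hc, zero_mul]
  have hmRw : _root_.expect ρ (fun b => margR ρ f b * occAt b 0 0 1) = 1 := by
    rw [show (fun b : Config (L' + 1) => margR ρ f b * occAt b 0 0 1) = margR ρ f from ?_, hmRE]
    funext b
    rw [occAt_eval _ 0 0 1 one_ne_zero (by omega)]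
    by_cases hc : b ⟨0, by omega⟩ = true
    · rw [if_pos (show b ⟨1 - 1, by omega⟩ = true from hc), mul_one]
    · rw [hmRzero b hc, zero_mul]
  refine ⟨dirichlet KCM.fa1 ρ (fun a => Real.sqrt (margL ρ f a)),
    ⟨margL ρ f, hmLnn, hmLE, hmLw, rfl⟩,
    dirichlet KCM.fa1 ρ (fun b => Real.sqrt (margR ρ f b)),
    ⟨margR ρ f, hmRnn, hmRE, hmRw, rfl⟩, ?_⟩
  rw [hzv]
  exact dirichlet_marg_le h0 h1 f hf hsupp

lemma oneSets_to_two (h0 : 0 < ρ) (h1 : ρ < 1) {x y : ℝ}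
    (hx : x ∈ oneSet KCM.fa1 ρ (L + 1)) (hy : y ∈ oneSet KCM.fa1 ρ (L' + 1)) :
    x + y ∈ twoSet ρ L L' := by
  obtain ⟨fa, hfa, hEa, hwa, hxv⟩ := hx
  obtain ⟨fb, hfb, hEb, hwb, hyv⟩ := hy
  have hsa : ∀ a, fa a ≠ 0 → a ⟨0, by omega⟩ = true := support_one h0 h1 hfa hEa hwa
  have hsb : ∀ b, fb b ≠ 0 → b ⟨0, by omega⟩ = true := support_one h0 h1 hfb hEb hwb
  refine ⟨fun η => fa (toL L L' η) * fb (toR L L' η),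
    fun η => mul_nonneg (hfa _) (hfb _), ?_, ?_, ?_⟩
  · rw [expect_glue_mul, hEa, hEb, mul_one]
  · have hpt : (fun η : Config (L + L' + 2) =>
        (fa (toL L L' η) * fb (toR L L' η)) * occ η ⟨L, by omega⟩ * occ η ⟨L + 1, by omega⟩)
        = fun η => (fa (toL L L' η) * occAt (toL L L' η) 0 0 1)
            * (fb (toR L L' η) * occAt (toR L L' η) 0 0 1) := by
      funext η
      have e1 : occ η ⟨L, by omega⟩ = occAt (toL L L' η) 0 0 1 := by
        rw [occAt_eval _ 0 0 1 one_ne_zero (by omega)]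
        rfl
      have e2 : occ η ⟨L + 1, by omega⟩ = occAt (toR L L' η) 0 0 1 := by
        rw [occAt_eval _ 0 0 1 one_ne_zero (by omega)]
        rfl
      rw [e1, e2]; ring
    rw [hpt]
    have hgm := expect_glue_mul (ρ := ρ) (L := L) (L' := L')
      (fun a => fa a * occAt a 0 0 1) (fun b => fb b * occAt b 0 0 1)
    rw [hwa, hwb, mul_one] at hgm
    exact hgm
  · rw [hxv, hyv]
    exact (dirichlet_prod_eq h0 h1 fa fb hfa hfb hsa hsb hEa hEb).symm

/-- The splitting identity for the interface energies. -/
lemma sigmaTwo_split (h0 : 0 < ρ) (h1 : ρ < 1) (L L' : ℕ) :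
    SigmaTwo ρ L L' = SigmaOne KCM.fa1 ρ (L + 1) + SigmaOne KCM.fa1 ρ (L' + 1) := by
  rw [SigmaTwo_def, SigmaOne_def, SigmaOne_def]
  apply le_antisymm
  · have key : ∀ x ∈ oneSet KCM.fa1 ρ (L + 1), ∀ y ∈ oneSet KCM.fa1 ρ (L' + 1),
        sInf (twoSet ρ L L') ≤ x + y := fun x hx y hy =>
      csInf_le (twoSet_bdd h0 h1 L L') (oneSets_to_two h0 h1 hx hy)
    have h2 : ∀ x ∈ oneSet KCM.fa1 ρ (L + 1),
        sInf (twoSet ρ L L') - x ≤ sInf (oneSet KCM.fa1 ρ (L' + 1)) := fun x hx =>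
      le_csInf (oneSet_nonempty h0 h1 L') fun y hy => by linarith [key x hx y hy]
    have h3 : sInf (twoSet ρ L L') - sInf (oneSet KCM.fa1 ρ (L' + 1))
        ≤ sInf (oneSet KCM.fa1 ρ (L + 1)) :=
      le_csInf (oneSet_nonempty h0 h1 L) fun x hx => by linarith [h2 x hx]
    linarith
  · refine le_csInf (twoSet_nonempty h0 h1 L L') fun z hz => ?_
    obtain ⟨x, hx, y, hy, hxy⟩ := twoSet_to_marg h0 h1 hz
    have := csInf_le (oneSet_bdd KCM.fa1 h0 h1 (L + 1)) hx
    have := csInf_le (oneSet_bdd KCM.fa1 h0 h1 (L' + 1)) hy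
    linarith

end Transfer

/-- **Remark 5.6** (relation between the FA-1f interface energies). At density
`ρ ∈ (0,1)`, the two-boundary FA-1f interface energy `Σ₁ = lim_L lim_{L'} Σ_{L,L'}`
and the one-boundary FA-1f interface energy `Σ₂ = lim_L Σ_L` satisfy `Σ₁ = 2Σ₂`. -/
theorem sigmaTwo_eq_two_mul_sigmaOne (ρ : ℝ) (hρ0 : 0 < ρ) (hρ1 : ρ < 1)
    (Sg1 Sg2 : ℝ) (S : ℕ → ℝ)
    (hS : ∀ L : ℕ, Filter.Tendsto (fun L' : ℕ => SigmaTwo ρ L L') Filter.atTop (nhds (S L)))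
    (hSg1 : Filter.Tendsto S Filter.atTop (nhds Sg1))
    (hSg2 : Filter.Tendsto (fun L : ℕ => SigmaOne KCM.fa1 ρ L) Filter.atTop (nhds Sg2)) :
    Sg1 = 2 * Sg2 := by
  have hsplit := sigmaTwo_split hρ0 hρ1
  have hshift : Filter.Tendsto (fun L' : ℕ => SigmaOne KCM.fa1 ρ (L' + 1))
      Filter.atTop (nhds Sg2) := hSg2.comp (tendsto_add_atTop_nat 1)
  have hS' : ∀ L : ℕ, S L = SigmaOne KCM.fa1 ρ (L + 1) + Sg2 := by
    intro L
    have t1 : Filter.Tendsto (fun L' : ℕ => SigmaTwo ρ L L') Filter.atTop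
        (nhds (SigmaOne KCM.fa1 ρ (L + 1) + Sg2)) := by
      have he : (fun L' : ℕ => SigmaTwo ρ L L')
          = fun L' : ℕ => SigmaOne KCM.fa1 ρ (L + 1) + SigmaOne KCM.fa1 ρ (L' + 1) :=
        funext fun L' => hsplit L L'
      rw [he]
      exact tendsto_const_nhds.add hshift
    exact tendsto_nhds_unique (hS L) t1
  have t2 : Filter.Tendsto S Filter.atTop (nhds (Sg2 + Sg2)) := by
    rw [funext hS']
    exact hshift.add tendsto_const_nhds
  have hfin := tendsto_nhds_unique hSg1 t2
  rw [hfin]; ring
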